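/- Let p₁, p₂ be positive integers and equip the product {1,…,p₁} × {1,…,p₂} of two chains with the product order, where (x₁,x₂) ≤ (y₁,y₂) if and only if x₁ ≤ y₁ and x₂ ≤ y₂. The number of nonempty antichains of this poset equals the binomial coefficient (p₁ + p₂ choose p₁) minus 1. -/

import Mathlib

open Finset

namespace AntichainProdAux

variable {α β : Type*} [LinearOrder α] [LinearOrder β] [DecidableEq α] [DecidableEq β]

lemma eq_of_fst_eq {A : Finset (α × β)} (hA : IsAntichain (· ≤ ·) (A : Set (α × β)))
    {x y : α × β} (hx : x ∈ A) (hy : y ∈ A) (h : x.1 = y.1) : x = y := by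
  by_contra hne
  rcases le_total x.2 y.2 with h2 | h2
  · exact hA (Finset.mem_coe.mpr hx) (Finset.mem_coe.mpr hy) hne (Prod.le_def.mpr ⟨h.le, h2⟩)
  · exact hA (Finset.mem_coe.mpr hy) (Finset.mem_coe.mpr hx) (Ne.symm hne)
      (Prod.le_def.mpr ⟨h.ge, h2⟩)

lemma eq_of_snd_eq {A : Finset (α × β)} (hA : IsAntichain (· ≤ ·) (A : Set (α × β)))
    {x y : α × β} (hx : x ∈ A) (hy : y ∈ A) (h : x.2 = y.2) : x = y := by
  by_contra hne
  rcases le_total x.1 y.1 with h2 | h2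
  · exact hA (Finset.mem_coe.mpr hx) (Finset.mem_coe.mpr hy) hne (Prod.le_def.mpr ⟨h2, h.le⟩)
  · exact hA (Finset.mem_coe.mpr hy) (Finset.mem_coe.mpr hx) (Ne.symm hne)
      (Prod.le_def.mpr ⟨h2, h.ge⟩)

lemma snd_lt_of_fst_lt {A : Finset (α × β)} (hA : IsAntichain (· ≤ ·) (A : Set (α × β)))
    {x y : α × β} (hx : x ∈ A) (hy : y ∈ A) (h : x.1 < y.1) : y.2 < x.2 := by
  by_contra h2
  push_neg at h2
  exact hA (Finset.mem_coe.mpr hx) (Finset.mem_coe.mpr hy)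
    (fun e => absurd (congrArg Prod.fst e) h.ne) (Prod.le_def.mpr ⟨h.le, h2⟩)

lemma card_image_fst {A : Finset (α × β)} (hA : IsAntichain (· ≤ ·) (A : Set (α × β))) :
    (A.image Prod.fst).card = A.card :=
  Finset.card_image_of_injOn fun x hx y hy h => eq_of_fst_eq hA hx hy h

lemma card_image_snd {A : Finset (α × β)} (hA : IsAntichain (· ≤ ·) (A : Set (α × β))) :
    (A.image Prod.snd).card = A.card :=
  Finset.card_image_of_injOn fun x hx y hy h => eq_of_snd_eq hA hx hy h

/-- Rank lemma : the number of second coordinates above `x.2` equals the number of first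
coordinates below `x.1`. -/
lemma rank_eq {A : Finset (α × β)}
    (hA : IsAntichain (· ≤ ·) (A : Set (α × β))) {x : α × β} (hx : x ∈ A) :
    ((A.image Prod.snd).filter fun b => x.2 ≤ b).card
      = ((A.image Prod.fst).filter fun a => a ≤ x.1).card := by
  have hfilter : (A.filter fun z => x.2 ≤ z.2) = (A.filter fun z => z.1 ≤ x.1) := by
    ext z
    simp only [Finset.mem_filter, and_congr_right_iff]
    intro hz
    constructor
    · intro h
      by_contra hle
      push_neg at hle
      exact absurd (snd_lt_of_fst_lt hA hx hz hle) (not_lt.mpr h)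
    · intro h
      rcases eq_or_lt_of_le h with h' | h'
      · rw [eq_of_fst_eq hA hz hx h']
      · exact (snd_lt_of_fst_lt hA hz hx h').le
  calc ((A.image Prod.snd).filter fun b => x.2 ≤ b).card
      = ((A.filter fun z => x.2 ≤ z.2).image Prod.snd).card := by
        rw [Finset.filter_image]
    _ = (A.filter fun z => x.2 ≤ z.2).card :=
        Finset.card_image_of_injOn fun a ha b hb h =>
          eq_of_snd_eq hA (Finset.mem_of_mem_filter a ha) (Finset.mem_of_mem_filter b hb) h
    _ = (A.filter fun z => z.1 ≤ x.1).card := by rw [hfilter]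
    _ = ((A.filter fun z => z.1 ≤ x.1).image Prod.fst).card :=
        (Finset.card_image_of_injOn fun a ha b hb h =>
          eq_of_fst_eq hA (Finset.mem_of_mem_filter a ha) (Finset.mem_of_mem_filter b hb) h).symm
    _ = ((A.image Prod.fst).filter fun a => a ≤ x.1).card := by rw [Finset.filter_image]

lemma eq_of_filter_le_card_eq {t : Finset β} {b b' : β} (hb : b ∈ t)
    (hb' : b' ∈ t)
    (h : (t.filter fun c => b ≤ c).card = (t.filter fun c => b' ≤ c).card) : b = b' := by
  have key : ∀ {c c' : β}, c ∈ t → c < c' →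
      (t.filter fun d => c' ≤ d).card < (t.filter fun d => c ≤ d).card := by
    intro c c' hc hlt
    apply Finset.card_lt_card
    rw [Finset.ssubset_iff_of_subset (fun d hd => Finset.mem_filter.mpr
      ⟨(Finset.mem_filter.mp hd).1, hlt.le.trans (Finset.mem_filter.mp hd).2⟩)]
    exact ⟨c, Finset.mem_filter.mpr ⟨hc, le_rfl⟩,
      fun hmem => absurd (Finset.mem_filter.mp hmem).2 (not_le.mpr hlt)⟩
  rcases lt_trichotomy b b' with hlt | he | hlt
  · exact absurd h (key hb hlt).ne'
  · exact he
  · exact absurd h (key hb' hlt).ne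

lemma subset_of_images {A B : Finset (α × β)}
    (hA : IsAntichain (· ≤ ·) (A : Set (α × β))) (hB : IsAntichain (· ≤ ·) (B : Set (α × β)))
    (h1 : A.image Prod.fst = B.image Prod.fst) (h2 : A.image Prod.snd = B.image Prod.snd) :
    A ⊆ B := by
  intro x hx
  have hx1 : x.1 ∈ B.image Prod.fst := h1 ▸ Finset.mem_image_of_mem Prod.fst hx
  obtain ⟨y, hy, hy1⟩ := Finset.mem_image.mp hx1
  have hrA := rank_eq hA hx
  have hrB := rank_eq hB hy
  rw [← h1, ← h2, hy1] at hrB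
  have hx2 : x.2 ∈ A.image Prod.snd := Finset.mem_image_of_mem Prod.snd hx
  have hy2 : y.2 ∈ A.image Prod.snd := h2 ▸ Finset.mem_image_of_mem Prod.snd hy
  have : x.2 = y.2 := eq_of_filter_le_card_eq hx2 hy2 (hrA.trans hrB.symm)
  have : x = y := Prod.ext hy1.symm this
  exact this ▸ hy

lemma eq_of_images {A B : Finset (α × β)}
    (hA : IsAntichain (· ≤ ·) (A : Set (α × β))) (hB : IsAntichain (· ≤ ·) (B : Set (α × β)))
    (h1 : A.image Prod.fst = B.image Prod.fst) (h2 : A.image Prod.snd = B.image Prod.snd) :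
    A = B :=
  Finset.Subset.antisymm (subset_of_images hA hB h1 h2) (subset_of_images hB hA h1.symm h2.symm)

/-- Build the antichain associated to a pair of finsets of the same cardinality. -/
noncomputable def gpair (s : Finset α) (t : Finset β) (h : t.card = s.card) :
    Finset (α × β) :=
  (Finset.univ : Finset (Fin s.card)).image fun i =>
    (s.orderEmbOfFin rfl i, t.orderEmbOfFin h i.rev)

lemma image_orderEmbOfFin (s : Finset α) {k : ℕ} (h : s.card = k) :
    (Finset.univ : Finset (Fin k)).image (s.orderEmbOfFin h) = s := by
  apply Finset.coe_injective
  rw [Finset.coe_image, Finset.coe_univ, Set.image_univ, Finset.range_orderEmbOfFin]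

lemma gpair_image_fst (s : Finset α) (t : Finset β) (h : t.card = s.card) :
    (gpair s t h).image Prod.fst = s := by
  classical
  rw [gpair, Finset.image_image]
  exact image_orderEmbOfFin s rfl

lemma gpair_image_snd (s : Finset α) (t : Finset β) (h : t.card = s.card) :
    (gpair s t h).image Prod.snd = t := by
  classical
  rw [gpair, Finset.image_image]
  have : ((Prod.snd ∘ fun i : Fin s.card => (s.orderEmbOfFin rfl i, t.orderEmbOfFin h i.rev)))
      = (t.orderEmbOfFin h) ∘ Fin.rev := rfl
  rw [this, ← Finset.image_image]
  have hrev : (Finset.univ : Finset (Fin s.card)).image Fin.rev = Finset.univ :=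
    Finset.image_univ_of_surjective Fin.rev_surjective
  rw [hrev]
  exact image_orderEmbOfFin t h

lemma gpair_antichain (s : Finset α) (t : Finset β) (h : t.card = s.card) :
    IsAntichain (· ≤ ·) ((gpair s t h : Finset (α × β)) : Set (α × β)) := by
  intro x hx y hy hne hle
  rw [Finset.mem_coe, gpair, Finset.mem_image] at hx hy
  obtain ⟨i, -, rfl⟩ := hx
  obtain ⟨j, -, rfl⟩ := hy
  have hij : i ≠ j := fun e => hne (by rw [e])
  rw [Prod.le_def] at hle
  have h1 : i ≤ j := (s.orderEmbOfFin rfl).le_iff_le.mp hle.1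
  have h2 : i.rev ≤ j.rev := (t.orderEmbOfFin h).le_iff_le.mp hle.2
  have h2' : j ≤ i := Fin.rev_le_rev.mp h2
  exact hij (le_antisymm h1 h2')

lemma gpair_card (s : Finset α) (t : Finset β) (h : t.card = s.card) :
    (gpair s t h).card = s.card := by
  rw [gpair, Finset.card_image_of_injective _ (fun i j e => ?_), Finset.card_univ,
    Fintype.card_fin]
  exact (s.orderEmbOfFin rfl).injective (congrArg Prod.fst e)

end AntichainProdAux

open AntichainProdAux in
open Classical in
lemma count_antichains_eq (p₁ p₂ : ℕ) :
    ((Finset.univ : Finset (Finset (Fin p₁ × Fin p₂))).filter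
      fun A : Finset (Fin p₁ × Fin p₂) => IsAntichain (· ≤ ·) (A : Set (Fin p₁ × Fin p₂))).card
      = (p₁ + p₂).choose p₁ := by
  classical
  have hbij : ((Finset.univ : Finset (Finset (Fin p₁ × Fin p₂))).filter
      fun A : Finset (Fin p₁ × Fin p₂) => IsAntichain (· ≤ ·) (A : Set (Fin p₁ × Fin p₂))).card
      = ((Finset.univ ×ˢ Finset.univ :
          Finset (Finset (Fin p₁) × Finset (Fin p₂))).filter
            fun q => q.1.card = q.2.card).card := by
    refine Finset.card_bij'
      (fun A _ => (A.image Prod.fst, A.image Prod.snd))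
      (fun q hq => gpair q.1 q.2 ((Finset.mem_filter.mp hq).2.symm))
      (fun A hA => ?_) (fun q hq => ?_) (fun A hA => ?_) (fun q hq => ?_)
    · have hanti := (Finset.mem_filter.mp hA).2
      simp only [Finset.mem_filter, Finset.mem_product, Finset.mem_univ, true_and,
        and_true]
      exact (card_image_fst hanti).trans (card_image_snd hanti).symm
    · simp only [Finset.mem_filter, Finset.mem_univ, true_and]
      exact gpair_antichain q.1 q.2 ((Finset.mem_filter.mp hq).2.symm)
    · have hanti := (Finset.mem_filter.mp hA).2
      exact eq_of_images (gpair_antichain _ _ _) hanti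
        (gpair_image_fst _ _ _) (gpair_image_snd _ _ _)
    · exact Prod.ext (gpair_image_fst _ _ _) (gpair_image_snd _ _ _)
  rw [hbij]
  -- now count pairs of finsets of equal cardinality
  have hk : ∀ k : ℕ, ((Finset.univ : Finset (Finset (Fin p₂))).filter
      fun t => t.card = k).card = p₂.choose k := by
    intro k
    rw [← Finset.powerset_univ, ← Finset.powersetCard_eq_filter,
      Finset.card_powersetCard, Finset.card_univ, Fintype.card_fin]
  have hk₁ : ∀ k : ℕ, ((Finset.univ : Finset (Finset (Fin p₁))).filter
      fun s => s.card = k).card = p₁.choose k := by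
    intro k
    rw [← Finset.powerset_univ, ← Finset.powersetCard_eq_filter,
      Finset.card_powersetCard, Finset.card_univ, Fintype.card_fin]
  have hstep : ((Finset.univ ×ˢ Finset.univ :
      Finset (Finset (Fin p₁) × Finset (Fin p₂))).filter
        fun q => q.1.card = q.2.card).card
      = ∑ s : Finset (Fin p₁), p₂.choose s.card := by
    rw [Finset.card_filter, Finset.sum_product]
    refine Finset.sum_congr rfl fun s _ => ?_
    rw [← hk s.card, Finset.card_filter]
    refine Finset.sum_congr rfl fun t _ => ?_
    simp [eq_comm]
  rw [hstep]
  have hfiber : ∑ s : Finset (Fin p₁), p₂.choose s.card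
      = ∑ k ∈ Finset.range (p₁ + 1), p₁.choose k * p₂.choose k := by
    rw [← Finset.sum_fiberwise_of_maps_to
      (fun s _ => Finset.mem_range.mpr (Nat.lt_succ_of_le (by
        simpa using Finset.card_le_card (Finset.subset_univ s))))
      (fun s : Finset (Fin p₁) => p₂.choose s.card)]
    refine Finset.sum_congr rfl fun k _ => ?_
    rw [Finset.sum_congr rfl (fun s hs => by
      rw [(Finset.mem_filter.mp hs).2]), Finset.sum_const, ← hk₁ k, smul_eq_mul]
  rw [hfiber]
  -- Vandermonde
  have hvdm : (p₁ + p₂).choose p₂ = ∑ k ∈ Finset.range (p₂ + 1),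
      p₁.choose k * p₂.choose k := by
    rw [Nat.add_choose_eq, Finset.Nat.sum_antidiagonal_eq_sum_range_succ_mk]
    refine Finset.sum_congr rfl fun k hk => ?_
    have hkle : k ≤ p₂ := Nat.lt_succ_iff.mp (Finset.mem_range.mp hk)
    show p₁.choose k * p₂.choose (p₂ - k) = _
    rw [Nat.choose_symm hkle]
  have hsym : (p₁ + p₂).choose p₁ = (p₁ + p₂).choose p₂ := by
    rw [← Nat.choose_symm (Nat.le_add_right p₁ p₂)]
    congr 1
    omega
  rw [hsym, hvdm]
  -- both sums equal the sum over range (p₁ + p₂ + 1)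
  have hext : ∀ n : ℕ, n ≤ p₁ + p₂ → p₁ ≤ n ∨ p₂ ≤ n →
      ∑ k ∈ Finset.range (n + 1), p₁.choose k * p₂.choose k
        = ∑ k ∈ Finset.range (p₁ + p₂ + 1), p₁.choose k * p₂.choose k := by
    intro n hn2 hn
    refine Finset.sum_subset (Finset.range_subset_range.mpr (by omega)) fun k _ hk => ?_
    have hk' : n + 1 ≤ k := by
      by_contra hcon
      exact hk (Finset.mem_range.mpr (by omega))
    rcases hn with hn | hn
    · rw [Nat.choose_eq_zero_of_lt (show p₁ < k by omega), zero_mul]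
    · rw [Nat.choose_eq_zero_of_lt (show p₂ < k by omega), mul_zero]
  rw [hext p₂ (Nat.le_add_left _ _) (Or.inr le_rfl), hext p₁ (Nat.le_add_right _ _) (Or.inl le_rfl)]

open AntichainProdAux in
/-- the number of nonempty antichains of the product of two chains
`{1,…,p₁} × {1,…,p₂}` (with the componentwise order) is `(p₁ + p₂ choose p₁) - 1`. -/
theorem card_nonempty_antichains_product_of_chains (p₁ p₂ : ℕ) (h₁ : 0 < p₁) (h₂ : 0 < p₂) :
    Nat.card {s : Finset (Fin p₁ × Fin p₂) //
        s.Nonempty ∧ IsAntichain (· ≤ ·) (s : Set (Fin p₁ × Fin p₂))} =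
      Nat.choose (p₁ + p₂) p₁ - 1 := by
  classical
  rw [Nat.card_eq_fintype_card, Fintype.card_subtype]
  have hins : ((Finset.univ : Finset (Finset (Fin p₁ × Fin p₂))).filter
      fun A : Finset (Fin p₁ × Fin p₂) => IsAntichain (· ≤ ·) (A : Set (Fin p₁ × Fin p₂)))
      = insert ∅ ((Finset.univ : Finset (Finset (Fin p₁ × Fin p₂))).filter
        fun A : Finset (Fin p₁ × Fin p₂) => A.Nonempty ∧ IsAntichain (· ≤ ·) (A : Set (Fin p₁ × Fin p₂))) := by
    ext A
    simp only [Finset.mem_filter, Finset.mem_univ, true_and, Finset.mem_insert]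
    constructor
    · intro h
      rcases A.eq_empty_or_nonempty with rfl | hne
      · exact Or.inl rfl
      · exact Or.inr ⟨hne, h⟩
    · rintro (rfl | ⟨-, h⟩)
      · intro x hx
        simp at hx
      · exact h
  have hnotmem : (∅ : Finset (Fin p₁ × Fin p₂)) ∉
      ((Finset.univ : Finset (Finset (Fin p₁ × Fin p₂))).filter
        fun A : Finset (Fin p₁ × Fin p₂) => A.Nonempty ∧ IsAntichain (· ≤ ·) (A : Set (Fin p₁ × Fin p₂))) := by
    simp [Finset.Nonempty]
  have := count_antichains_eq p₁ p₂
  rw [hins, Finset.card_insert_of_notMem hnotmem] at this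
  omega
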